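/- For every infinite sequence (T_i)_{i≥1} of triangular sets in K[x_1,…,x_n] such that for each i either T_{i+1} ≺ T_i or T_{i+1} ∼ T_i, there exists an integer m such that T_i ∼ T_m for all i ≥ m. Equivalently, the strict ranking order ≺ on triangular sets is well-founded, so every nonempty collection of triangular sets contains a minimal element with respect to ≺. -/

import Mathlib

open MvPolynomial

variable {n : ℕ} {K : Type*} [Field K]

/-- Lexicographic order on monomials (exponent vectors) induced by the variable
ordering `x_1 < ⋯ < x_n`: higher-indexed variables are more significant. -/
def MonLt {n : ℕ} (a b : Fin n →₀ ℕ) : Prop :=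
  ∃ i : Fin n, a i < b i ∧ ∀ j : Fin n, i < j → a j = b j

/-- The order `P < Q` on polynomials: `P < Q` iff `lt(P) <_lex lt(Q)`, or the
heading terms agree and the tails satisfy `P - lm(P) < Q - lm(Q)` (with `0 < R`
for every nonzero `R`).  Equivalently (since only supports matter): the supports
of `P` and `Q` differ and the lex-greatest monomial in their symmetric
difference belongs to the support of `Q`. -/
def PoLt (P Q : MvPolynomial (Fin n) K) : Prop :=
  ∃ m ∈ Q.support \ P.support,
    ∀ m' ∈ (P.support \ Q.support) ∪ (Q.support \ P.support), m' ≠ m → MonLt m' m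

/-- `P ≈ Q` : neither `P < Q` nor `Q < P`. -/
def PoEq (P Q : MvPolynomial (Fin n) K) : Prop := ¬ PoLt P Q ∧ ¬ PoLt Q P

/-- The class of a polynomial: the (1-based) index of its leading variable;
`0` for (nonzero) constants. -/
noncomputable def cls (P : MvPolynomial (Fin n) K) : ℕ :=
  P.vars.sup fun i => i.1 + 1

/-- The leading degree of a polynomial: its degree in its leading variable;
`0` for constants. -/
noncomputable def ldeg (P : MvPolynomial (Fin n) K) : ℕ :=
  WithBot.recBotCoe 0 (fun i => P.degreeOf i) P.vars.max

/-- Ranking of polynomials: `P ≺ Q`. -/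
def RankLt (P Q : MvPolynomial (Fin n) K) : Prop :=
  cls P < cls Q ∨ (cls P = cls Q ∧ ldeg P < ldeg Q)

/-- `P ∼ Q` : neither `P ≺ Q` nor `Q ≺ P`. -/
def RankEq (P Q : MvPolynomial (Fin n) K) : Prop := ¬ RankLt P Q ∧ ¬ RankLt Q P

/-- `P` is reduced w.r.t. a nonconstant `Q`: `deg(P, lv(Q)) < ldeg(Q)`. -/
def ReducedWrt (P Q : MvPolynomial (Fin n) K) : Prop :=
  ∀ i : Fin n, Q.vars.max = (i : WithBot (Fin n)) → P.degreeOf i < Q.degreeOf i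

/-- A triangular set: a list of nonconstant polynomials with strictly
increasing leading variables. -/
def IsTriangular (T : List (MvPolynomial (Fin n) K)) : Prop :=
  (∀ P ∈ T, 0 < cls P) ∧ T.Chain' fun P Q => cls P < cls Q

/-- Ranking of triangular sets (as lists): `T ≺ S`. -/
def TriLt (T S : List (MvPolynomial (Fin n) K)) : Prop :=
  (∃ i, i < T.length ∧ i < S.length ∧
      (∀ j < i, RankEq (T.getD j 0) (S.getD j 0)) ∧
      RankLt (T.getD i 0) (S.getD i 0)) ∨
  (S.length < T.length ∧ ∀ j < S.length, RankEq (T.getD j 0) (S.getD j 0))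

/-- `T ∼ S` : neither `T ≺ S` nor `S ≺ T`. -/
def TriEq (T S : List (MvPolynomial (Fin n) K)) : Prop := ¬ TriLt T S ∧ ¬ TriLt S T

/-- An ascending set: either a triangular set in which every element is reduced
w.r.t. all earlier elements (non-contradictory), or a single nonzero constant
(contradictory). -/
def IsAscending (A : List (MvPolynomial (Fin n) K)) : Prop :=
  (IsTriangular A ∧ A.Pairwise fun P Q => ReducedWrt Q P) ∨
  ∃ a : K, a ≠ 0 ∧ A = [MvPolynomial.C a]

/-- A basic set of a polynomial set `S`: an ascending set contained in `S`
such that no ascending set contained in `S` has strictly lower ranking. -/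
def IsBasicSet (B : List (MvPolynomial (Fin n) K))
    (S : Set (MvPolynomial (Fin n) K)) : Prop :=
  IsAscending B ∧ (∀ b ∈ B, b ∈ S) ∧
    ∀ B' : List (MvPolynomial (Fin n) K),
      IsAscending B' → (∀ b ∈ B', b ∈ S) → ¬ TriLt B' B

/-- A medial set of a polynomial set `S`: an ascending set contained in the
ideal `⟨S⟩` whose ranking is not higher than that of any basic set of `S`. -/
def IsMedialSet (M : List (MvPolynomial (Fin n) K))
    (S : Set (MvPolynomial (Fin n) K)) : Prop :=
  IsAscending M ∧ (∀ F ∈ M, F ∈ Ideal.span S) ∧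
    ∀ B : List (MvPolynomial (Fin n) K), IsBasicSet B S → ¬ TriLt B M

/-- The leading coefficient of `P` regarded as a univariate polynomial in
`x_q`, as a polynomial in the remaining variables. -/
noncomputable def lcOf (P : MvPolynomial (Fin n) K) (q : Fin n) :
    MvPolynomial (Fin n) K :=
  ∑ m ∈ P.support.filter fun m => m q = P.degreeOf q,
    MvPolynomial.monomial (m.erase q) (P.coeff m)

/-- The initial of `P`: its leading coefficient w.r.t. its leading variable. -/
noncomputable def initOf (P : MvPolynomial (Fin n) K) : MvPolynomial (Fin n) K :=
  WithBot.recBotCoe P (fun q => lcOf P q) P.vars.max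
section StabilizeAux

variable {n : ℕ} {K : Type*} [Field K]

/-- The rank of a polynomial as an element of `ℕ ×ₗ ℕ`. -/
noncomputable def rkPair (P : MvPolynomial (Fin n) K) : ℕ ×ₗ ℕ := toLex (cls P, ldeg P)

lemma rankLt_iff_rk (P Q : MvPolynomial (Fin n) K) : RankLt P Q ↔ rkPair P < rkPair Q := by
  rw [rkPair, rkPair, Prod.Lex.lt_iff]; rfl

lemma rankEq_iff_rk (P Q : MvPolynomial (Fin n) K) : RankEq P Q ↔ rkPair P = rkPair Q := by
  constructor
  · rintro ⟨h1, h2⟩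
    rw [rankLt_iff_rk] at h1 h2
    exact le_antisymm (not_lt.1 h2) (not_lt.1 h1)
  · intro h
    constructor <;> rw [rankLt_iff_rk, h] <;> exact lt_irrefl _

lemma cls_le_n (P : MvPolynomial (Fin n) K) : cls P ≤ n :=
  Finset.sup_le fun i _ => i.2

lemma getD_eq_get' (T : List (MvPolynomial (Fin n) K)) {j : ℕ} (h : j < T.length) :
    T.getD j 0 = T.get ⟨j, h⟩ := by
  simp [List.getD_eq_getElem?_getD, List.getElem?_eq_getElem h]

lemma IsTriangular.length_le_n {T : List (MvPolynomial (Fin n) K)} (hT : IsTriangular T) :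
    T.length ≤ n := by
  obtain ⟨hpos, hchain⟩ := hT
  have hpw : T.Pairwise fun P Q => cls P < cls Q :=
    (@List.isChain_iff_pairwise _ _ _ ⟨fun h1 h2 => h1.trans h2⟩).1 hchain
  rw [List.pairwise_iff_get] at hpw
  by_contra hc
  push_neg at hc
  have key : ∀ j (hj : j < T.length), j + 1 ≤ cls (T.get ⟨j, hj⟩) := by
    intro j
    induction j with
    | zero => intro hj; exact hpos _ (T.get_mem _)
    | succ k ih =>
      intro hj
      have hk : k < T.length := Nat.lt_of_succ_lt hj
      have hlt := hpw ⟨k, hk⟩ ⟨k + 1, hj⟩ (Fin.mk_lt_mk.2 (Nat.lt_succ_self k))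
      exact Nat.succ_le_of_lt (lt_of_le_of_lt (ih hk) hlt)
  exact absurd (le_trans (key n hc) (cls_le_n _)) (by omega)

/-- Encoding of a triangular set into a lexicographically ordered function space. -/
noncomputable def fT (T : List (MvPolynomial (Fin n) K)) : Fin n → WithTop (ℕ ×ₗ ℕ) :=
  fun j => if _ : (j : ℕ) < T.length then ((rkPair (T.getD j 0) : ℕ ×ₗ ℕ) : WithTop (ℕ ×ₗ ℕ)) else ⊤

lemma fT_lt_of_triLt {T S : List (MvPolynomial (Fin n) K)} (hT : IsTriangular T)
    (hS : IsTriangular S) (h : TriLt T S) : toLex (fT T) < toLex (fT S) := by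
  rcases h with ⟨i, hiT, hiS, hpre, hlt⟩ | ⟨hlen, hpre⟩
  · have hin : i < n := lt_of_lt_of_le hiT hT.length_le_n
    refine ⟨⟨i, hin⟩, fun j hj => ?_, ?_⟩
    · have hj' : (j : ℕ) < i := hj
      have hjT : (j : ℕ) < T.length := lt_trans hj' hiT
      have hjS : (j : ℕ) < S.length := lt_trans hj' hiS
      show fT T j = fT S j
      simp only [fT, dif_pos hjT, dif_pos hjS]
      exact congrArg _ ((rankEq_iff_rk _ _).1 (hpre _ hj'))
    · show fT T ⟨i, hin⟩ < fT S ⟨i, hin⟩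
      simp only [fT, dif_pos hiT, dif_pos hiS]
      exact WithTop.coe_lt_coe.2 ((rankLt_iff_rk _ _).1 hlt)
  · have hiT : S.length < T.length := hlen
    have hin : S.length < n := lt_of_lt_of_le hiT hT.length_le_n
    refine ⟨⟨S.length, hin⟩, fun j hj => ?_, ?_⟩
    · have hj' : (j : ℕ) < S.length := hj
      have hjT : (j : ℕ) < T.length := lt_trans hj' hiT
      show fT T j = fT S j
      simp only [fT, dif_pos hjT, dif_pos hj']
      exact congrArg _ ((rankEq_iff_rk _ _).1 (hpre _ hj'))
    · show fT T ⟨S.length, hin⟩ < fT S ⟨S.length, hin⟩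
      simp only [fT, dif_pos hiT, dif_neg (lt_irrefl S.length)]
      exact WithTop.coe_lt_top _

lemma triLt_of_fT_lt {T S : List (MvPolynomial (Fin n) K)}
    (h : toLex (fT T) < toLex (fT S)) : TriLt T S := by
  obtain ⟨i, hpre, hlt⟩ := h
  have hlt' : fT T i < fT S i := hlt
  have hiT : (i : ℕ) < T.length := by
    by_contra hc
    rw [fT] at hlt'
    rw [dif_neg hc] at hlt'
    exact not_top_lt hlt'
  by_cases hiS : (i : ℕ) < S.length
  · left
    refine ⟨i, hiT, hiS, ?_, ?_⟩
    · intro j hj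
      have hjn : j < n := lt_trans hj i.2
      have heq : fT T ⟨j, hjn⟩ = fT S ⟨j, hjn⟩ := hpre ⟨j, hjn⟩ hj
      have hjT : j < T.length := lt_trans hj hiT
      have hjS : j < S.length := by
        by_contra hc
        rw [fT, fT] at heq
        rw [dif_pos hjT, dif_neg hc] at heq
        exact (WithTop.coe_ne_top) heq
      rw [fT, fT, dif_pos hjT, dif_pos hjS] at heq
      exact (rankEq_iff_rk _ _).2 (WithTop.coe_inj.1 heq)
    · rw [fT, fT, dif_pos hiT, dif_pos hiS] at hlt'
      exact (rankLt_iff_rk _ _).2 (WithTop.coe_lt_coe.1 hlt')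
  · right
    push_neg at hiS
    refine ⟨lt_of_le_of_lt hiS hiT, ?_⟩
    intro j hj
    have hji : j < (i : ℕ) := lt_of_lt_of_le hj hiS
    have hjn : j < n := lt_trans hji i.2
    have heq : fT T ⟨j, hjn⟩ = fT S ⟨j, hjn⟩ := hpre ⟨j, hjn⟩ hji
    have hjT : j < T.length := lt_trans hji hiT
    rw [fT, fT, dif_pos hjT, dif_pos hj] at heq
    exact (rankEq_iff_rk _ _).2 (WithTop.coe_inj.1 heq)

lemma fT_lt_irrefl (T : List (MvPolynomial (Fin n) K)) :
    ¬ toLex (fT T) < toLex (fT T) := by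
  rintro ⟨i, -, hlt⟩
  exact lt_irrefl _ (show fT T i < fT T i from hlt)

lemma fT_trichotomy (T S : List (MvPolynomial (Fin n) K)) :
    toLex (fT T) < toLex (fT S) ∨ fT T = fT S ∨ toLex (fT S) < toLex (fT T) := by
  have wf : WellFounded ((· < ·) : Fin n → Fin n → Prop) :=
    (inferInstance : WellFoundedLT (Fin n)).wf
  by_contra h
  push_neg at h
  exact h.2.1 ((Pi.trichotomous_lex (β := fun _ => WithTop (ℕ ×ₗ ℕ)) (s := (· < ·)) _ wf).trichotomous
    (fT T) (fT S) h.1 h.2.2)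

lemma triEq_iff_fT {T S : List (MvPolynomial (Fin n) K)} (hT : IsTriangular T)
    (hS : IsTriangular S) : TriEq T S ↔ fT T = fT S := by
  constructor
  · rintro ⟨h1, h2⟩
    rcases fT_trichotomy T S with h | h | h
    · exact absurd (triLt_of_fT_lt h) h1
    · exact h
    · exact absurd (triLt_of_fT_lt h) h2
  · intro h
    constructor
    · intro hlt
      have := fT_lt_of_triLt hT hS hlt
      rw [h] at this
      exact fT_lt_irrefl _ this
    · intro hlt
      have := fT_lt_of_triLt hS hT hlt
      rw [h] at this
      exact fT_lt_irrefl _ this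

end StabilizeAux

/-- any `≾`-decreasing sequence of triangular sets stabilizes up to `∼`;
equivalently `≺` is well-founded on triangular sets, so every nonempty collection of
triangular sets has a `≺`-minimal element. -/
theorem triangular_sequence_stabilizes_and_min_exists
    {n : ℕ} {K : Type*} [Field K] (hn : 1 ≤ n) :
    (∀ T : ℕ → List (MvPolynomial (Fin n) K),
        (∀ i, IsTriangular (T i)) →
        (∀ i, TriLt (T (i + 1)) (T i) ∨ TriEq (T (i + 1)) (T i)) →
        ∃ m : ℕ, ∀ i, m ≤ i → TriEq (T i) (T m)) ∧
    (∀ 𝒮 : Set (List (MvPolynomial (Fin n) K)),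
        (∀ T ∈ 𝒮, IsTriangular T) → 𝒮.Nonempty →
        ∃ T ∈ 𝒮, ∀ S ∈ 𝒮, ¬ TriLt S T) := by
  have hwf : WellFounded ((· < ·) : Lex (Fin n → WithTop (ℕ ×ₗ ℕ)) →
      Lex (Fin n → WithTop (ℕ ×ₗ ℕ)) → Prop) :=
    (inferInstance : WellFoundedLT (Lex (Fin n → WithTop (ℕ ×ₗ ℕ)))).wf
  have htrans : ∀ a b c : Lex (Fin n → WithTop (ℕ ×ₗ ℕ)), a < b → b < c → a < c :=
    fun _ _ _ h1 h2 => IsTrans.trans _ _ _ h1 h2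
  constructor
  · intro T hTri hdec
    set g : ℕ → Lex (Fin n → WithTop (ℕ ×ₗ ℕ)) := fun i => toLex (fT (T i)) with hg
    have hmono : ∀ i j, i ≤ j → g j < g i ∨ g j = g i := by
      intro i j hij
      induction j, hij using Nat.le_induction with
      | base => exact Or.inr rfl
      | succ k hk ih =>
        have hstep : g (k + 1) < g k ∨ g (k + 1) = g k := by
          rcases hdec k with h | h
          · exact Or.inl (fT_lt_of_triLt (hTri (k + 1)) (hTri k) h)
          · exact Or.inr (congrArg toLex ((triEq_iff_fT (hTri (k + 1)) (hTri k)).1 h))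
        rcases hstep with h1 | h1 <;> rcases ih with h2 | h2
        · exact Or.inl (htrans _ _ _ h1 h2)
        · exact Or.inl (h2 ▸ h1)
        · exact Or.inl (h1 ▸ h2)
        · exact Or.inr (h1.trans h2)
    obtain ⟨y, ⟨m, rfl⟩, hmin⟩ := hwf.has_min (Set.range g) (Set.range_nonempty g)
    refine ⟨m, fun i hi => ?_⟩
    have h1 : g i < g m ∨ g i = g m := hmono m i hi
    have h2 : ¬ g i < g m := hmin _ ⟨i, rfl⟩
    have h3 : g i = g m := h1.resolve_left h2
    exact (triEq_iff_fT (hTri i) (hTri m)).2 (by simpa [hg] using h3)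
  · intro S hTri hne
    obtain ⟨y, ⟨Tm, hTm, rfl⟩, hmin⟩ :=
      hwf.has_min ((fun T => toLex (fT T)) '' S) (hne.image _)
    exact ⟨Tm, hTm, fun A hA hlt =>
      hmin _ ⟨A, hA, rfl⟩ (fT_lt_of_triLt (hTri A hA) (hTri Tm hTm) hlt)⟩
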